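/- For a weight w on [0,1] (a positive measurable function), setting ⦃w⦄_{A₂} = sup_{J⊆[0,1]} inf_{c∈ℝ} ⟨e^{|log w − c|}⟩_J and [w]_{A₂} = sup_{J⊆[0,1]} ⟨w⟩_J ⟨w^{−1}⟩_J, one has √([w]_{A₂}) ≤ ⦃w⦄_{A₂} ≤ 2[w]_{A₂}. -/

import Mathlib

open MeasureTheory Set Filter Topology
open scoped ENNReal

noncomputable section

/-- Lebesgue average of a (nonnegative-valued, via `ENNReal.ofReal`) function over `J`. -/
def avg (J : Set ℝ) (f : ℝ → ℝ) : ℝ≥0∞ :=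
  (volume J)⁻¹ * ∫⁻ x in J, ENNReal.ofReal (f x)

/-- `V_c(φ, J) = ⟨Q(φ - c)⟩_J`. -/
def Vc (Q φ : ℝ → ℝ) (J : Set ℝ) (c : ℝ) : ℝ≥0∞ :=
  avg J (fun x => Q (φ x - c))

/-- `V(φ, J) = inf_c V_c(φ, J)`. -/
def V (Q φ : ℝ → ℝ) (J : Set ℝ) : ℝ≥0∞ :=
  ⨅ c : ℝ, Vc Q φ J c

/-- `W(φ, J) = sup { V(φ, L) : L ⊆ J an interval }`. -/
def W (Q φ : ℝ → ℝ) (J : Set ℝ) : ℝ≥0∞ :=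
  ⨆ (a : ℝ) (b : ℝ) (_ : Icc a b ⊆ J), V Q φ (Icc a b)

/-- Decreasing rearrangement of `f : [0,1] → ℝ`:
`f*(t) = inf {λ : |{s ∈ [0,1] : f(s) > λ}| ≤ t}`. -/
def decRe (f : ℝ → ℝ) (t : ℝ) : ℝ :=
  sInf {l : ℝ | volume {s ∈ Icc (0:ℝ) 1 | l < f s} ≤ ENNReal.ofReal t}

/-- `𝒞(φ, J)`: the minimizer of `c ↦ V_c(φ, J)` (when it exists). -/
def CC (Q φ : ℝ → ℝ) (J : Set ℝ) : ℝ :=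
  Classical.epsilon (fun c => ∀ c', Vc Q φ J c ≤ Vc Q φ J c')

/-- `α`-concatenation of `φ₋ : [a₋,b₋] → ℝ` and `φ₊ : [a₊,b₊] → ℝ`, as a function on `[0,1]`. -/
def concat (φm φp : ℝ → ℝ) (am bm ap bp α : ℝ) : ℝ → ℝ :=
  fun s => if s < α then φm (am + (bm - am) * (s / α))
           else φp (ap + (bp - ap) * ((s - α) / (1 - α)))

/-- `⦃w⦄_{A₂} = sup_J inf_c ⟨e^{|log w - c|}⟩_J`. -/
def catwo (w : ℝ → ℝ) : ℝ≥0∞ :=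
  ⨆ (a : ℝ) (b : ℝ) (_ : Icc a b ⊆ Icc (0:ℝ) 1),
    ⨅ c : ℝ, avg (Icc a b) (fun x => Real.exp |Real.log (w x) - c|)

/-- `[w]_{A₂} = sup_J ⟨w⟩_J ⟨w⁻¹⟩_J`. -/
def a2char (w : ℝ → ℝ) : ℝ≥0∞ :=
  ⨆ (a : ℝ) (b : ℝ) (_ : Icc a b ⊆ Icc (0:ℝ) 1),
    avg (Icc a b) w * avg (Icc a b) (fun x => (w x)⁻¹)

lemma avg_mono_on {J : Set ℝ} (hJ : MeasurableSet J) {f g : ℝ → ℝ}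
    (h : ∀ x ∈ J, f x ≤ g x) : avg J f ≤ avg J g :=
  mul_le_mul_right (setLIntegral_mono' hJ fun x hx => ENNReal.ofReal_le_ofReal (h x hx)) _

lemma avg_const_mul (J : Set ℝ) {r : ℝ} (hr : 0 ≤ r) (f : ℝ → ℝ) :
    avg J (fun x => r * f x) = ENNReal.ofReal r * avg J f := by
  unfold avg
  rw [← mul_assoc, mul_comm (ENNReal.ofReal r), mul_assoc,
    ← lintegral_const_mul' _ _ ENNReal.ofReal_ne_top]
  simp_rw [← ENNReal.ofReal_mul hr]

lemma avg_add_on {J : Set ℝ} (hJm : MeasurableSet J) {f g : ℝ → ℝ} (hf : Measurable f)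
    (hf0 : ∀ x ∈ J, 0 ≤ f x) (hg0 : ∀ x ∈ J, 0 ≤ g x) :
    avg J (fun x => f x + g x) = avg J f + avg J g := by
  unfold avg
  rw [← mul_add, ← lintegral_add_left hf.ennreal_ofReal,
    setLIntegral_congr_fun hJm
      (fun x hx => ENNReal.ofReal_add (hf0 x hx) (hg0 x hx))]

lemma sqrt_le_Vc (w : ℝ → ℝ) {a b : ℝ} (hpos : ∀ x ∈ Icc a b, 0 < w x) (c : ℝ) :
    (avg (Icc a b) w * avg (Icc a b) (fun x => (w x)⁻¹)) ^ (1/2 : ℝ)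
      ≤ avg (Icc a b) (fun x => Real.exp |Real.log (w x) - c|) := by
  set J := Icc a b with hJ
  set E := avg J (fun x => Real.exp |Real.log (w x) - c|) with hE
  have hA : avg J w ≤ ENNReal.ofReal (Real.exp c) * E := by
    rw [hE, ← avg_const_mul _ (Real.exp_nonneg c)]
    refine avg_mono_on measurableSet_Icc fun x hx => ?_
    have hwx := hpos x hx
    calc w x = Real.exp (Real.log (w x)) := (Real.exp_log hwx).symm
      _ ≤ Real.exp (c + |Real.log (w x) - c|) := Real.exp_le_exp.2 (by
          have := le_abs_self (Real.log (w x) - c); linarith)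
      _ = Real.exp c * Real.exp |Real.log (w x) - c| := Real.exp_add _ _
  have hB : avg J (fun x => (w x)⁻¹) ≤ ENNReal.ofReal (Real.exp (-c)) * E := by
    rw [hE, ← avg_const_mul _ (Real.exp_nonneg (-c))]
    refine avg_mono_on measurableSet_Icc fun x hx => ?_
    have hwx := hpos x hx
    calc (w x)⁻¹ = Real.exp (-Real.log (w x)) := by
          rw [Real.exp_neg, Real.exp_log hwx]
      _ ≤ Real.exp (-c + |Real.log (w x) - c|) := Real.exp_le_exp.2 (by
          have := neg_abs_le (Real.log (w x) - c); linarith)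
      _ = Real.exp (-c) * Real.exp |Real.log (w x) - c| := Real.exp_add _ _
  have hprod : avg J w * avg J (fun x => (w x)⁻¹) ≤ E * E := by
    calc avg J w * avg J (fun x => (w x)⁻¹)
        ≤ (ENNReal.ofReal (Real.exp c) * E) * (ENNReal.ofReal (Real.exp (-c)) * E) :=
          mul_le_mul' hA hB
      _ = (ENNReal.ofReal (Real.exp c) * ENNReal.ofReal (Real.exp (-c))) * (E * E) := by
          ring
      _ = E * E := by
          rw [← ENNReal.ofReal_mul (Real.exp_nonneg c), ← Real.exp_add]
          norm_num
  calc (avg J w * avg J (fun x => (w x)⁻¹)) ^ (1/2 : ℝ)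
      ≤ (E * E) ^ (1/2 : ℝ) := ENNReal.rpow_le_rpow hprod (by norm_num)
    _ = (E ^ (2:ℝ)) ^ (1/2 : ℝ) := by rw [ENNReal.rpow_two, sq]
    _ = E := by rw [← ENNReal.rpow_mul]; norm_num

lemma one_le_avg_mul (w : ℝ → ℝ) (hw : Measurable w) {a b : ℝ} (hab : a < b)
    (hpos : ∀ x ∈ Icc a b, 0 < w x) :
    1 ≤ avg (Icc a b) w * avg (Icc a b) (fun x => (w x)⁻¹) := by
  set J := Icc a b with hJ
  have hJm : MeasurableSet J := measurableSet_Icc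
  have hvol : volume J = ENNReal.ofReal (b - a) := by simp [hJ, Real.volume_Icc]
  have hv0 : volume J ≠ 0 := by rw [hvol]; simp; linarith
  have hvne : volume J ≠ ⊤ := by rw [hvol]; exact ENNReal.ofReal_ne_top
  set f : ℝ → ℝ≥0∞ := fun x => (ENNReal.ofReal (w x)) ^ (1/2 : ℝ) with hf
  set g : ℝ → ℝ≥0∞ := fun x => (ENNReal.ofReal (w x)⁻¹) ^ (1/2 : ℝ) with hg
  have hpq : Real.HolderConjugate 2 2 := Real.HolderConjugate.two_two
  have hfm : AEMeasurable f (volume.restrict J) :=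
    (hw.ennreal_ofReal.pow_const _).aemeasurable
  have hgm : AEMeasurable g (volume.restrict J) :=
    ((hw.inv).ennreal_ofReal.pow_const _).aemeasurable
  have h1 : ∀ x ∈ J, (f * g) x = 1 := by
    intro x hx
    have hwx := hpos x hx
    simp only [Pi.mul_apply, hf, hg]
    rw [← ENNReal.mul_rpow_of_nonneg _ _ (by norm_num : (0:ℝ) ≤ 1/2),
      ← ENNReal.ofReal_mul hwx.le, mul_inv_cancel₀ hwx.ne', ENNReal.ofReal_one,
      ENNReal.one_rpow]
  have h2 : volume J = ∫⁻ x in J, (f * g) x := by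
    rw [setLIntegral_congr_fun hJm h1]
    simp
  have hCS := ENNReal.lintegral_mul_le_Lp_mul_Lq (volume.restrict J) hpq hfm hgm
  have hfsq : ∀ x, f x ^ (2:ℝ) = ENNReal.ofReal (w x) := by
    intro x; rw [hf, ← ENNReal.rpow_mul]; norm_num
  have hgsq : ∀ x, g x ^ (2:ℝ) = ENNReal.ofReal (w x)⁻¹ := by
    intro x; rw [hg, ← ENNReal.rpow_mul]; norm_num
  simp_rw [hfsq, hgsq] at hCS
  set X := ∫⁻ x in J, ENNReal.ofReal (w x) with hX
  set Y := ∫⁻ x in J, ENNReal.ofReal (w x)⁻¹ with hY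
  have hvXY : volume J ≤ X ^ (1/2:ℝ) * Y ^ (1/2:ℝ) := h2.le.trans hCS
  have hsq : volume J * volume J ≤ X * Y := by
    calc volume J * volume J ≤ (X ^ (1/2:ℝ) * Y ^ (1/2:ℝ)) * (X ^ (1/2:ℝ) * Y ^ (1/2:ℝ)) :=
          mul_le_mul' hvXY hvXY
      _ = (X ^ (1/2:ℝ) * X ^ (1/2:ℝ)) * (Y ^ (1/2:ℝ) * Y ^ (1/2:ℝ)) := by ring
      _ = X * Y := by
          rw [← ENNReal.rpow_add_of_nonneg _ _ (by norm_num) (by norm_num),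
            ← ENNReal.rpow_add_of_nonneg _ _ (by norm_num) (by norm_num)]
          norm_num
  have : (1:ℝ≥0∞) = ((volume J)⁻¹ * (volume J)⁻¹) * (volume J * volume J) := by
    rw [show (volume J)⁻¹ * (volume J)⁻¹ * (volume J * volume J)
        = ((volume J)⁻¹ * volume J) * ((volume J)⁻¹ * volume J) by ring,
      ENNReal.inv_mul_cancel hv0 hvne, one_mul]
  calc (1:ℝ≥0∞) = ((volume J)⁻¹ * (volume J)⁻¹) * (volume J * volume J) := this
    _ ≤ ((volume J)⁻¹ * (volume J)⁻¹) * (X * Y) := mul_le_mul_right hsq _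
    _ = ((volume J)⁻¹ * X) * ((volume J)⁻¹ * Y) := by ring
    _ = avg J w * avg J (fun x => (w x)⁻¹) := rfl

lemma iInf_le_two_mul (w : ℝ → ℝ) (hw : Measurable w) {a b : ℝ}
    (hpos : ∀ x ∈ Icc a b, 0 < w x) :
    (⨅ c : ℝ, avg (Icc a b) (fun x => Real.exp |Real.log (w x) - c|))
      ≤ 2 * (avg (Icc a b) w * avg (Icc a b) (fun x => (w x)⁻¹)) := by
  set J := Icc a b with hJ
  by_cases hab : a < b
  swap
  · -- degenerate interval: every average is zero
    have hv : volume J = 0 := by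
      rw [hJ, Real.volume_Icc, ENNReal.ofReal_eq_zero]
      linarith [not_lt.1 hab]
    have h0 : avg J (fun x => Real.exp |Real.log (w x) - (0:ℝ)|) = 0 := by
      unfold avg
      rw [setLIntegral_measure_zero _ _ hv, mul_zero]
    exact le_trans (iInf_le _ 0) (by rw [h0]; exact zero_le)
  set A := avg J w with hA
  set B := avg J (fun x => (w x)⁻¹) with hB
  have hAB : 1 ≤ A * B := one_le_avg_mul w hw hab hpos
  by_cases htop : A * B = ⊤
  · rw [htop, ENNReal.mul_top two_ne_zero]; exact le_top
  have hAne : A ≠ ⊤ := by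
    intro h
    have hB0 : B ≠ 0 := by rintro h0; rw [h0, mul_zero] at hAB; exact (zero_lt_one.not_ge hAB)
    exact htop (by rw [h]; exact ENNReal.top_mul hB0)
  have hA0 : A ≠ 0 := by rintro h0; rw [h0, zero_mul] at hAB; exact zero_lt_one.not_ge hAB
  set t := A.toReal with ht
  have ht0 : 0 < t := ENNReal.toReal_pos hA0 hAne
  set c := Real.log t with hc
  have hec : Real.exp c = t := Real.exp_log ht0
  have henc : Real.exp (-c) = t⁻¹ := by rw [Real.exp_neg, hec]
  refine le_trans (iInf_le _ c) ?_
  have hstep : avg J (fun x => Real.exp |Real.log (w x) - c|)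
      ≤ ENNReal.ofReal t⁻¹ * A + ENNReal.ofReal t * B := by
    have hmono : avg J (fun x => Real.exp |Real.log (w x) - c|)
        ≤ avg J (fun x => t⁻¹ * w x + t * (w x)⁻¹) := by
      refine avg_mono_on measurableSet_Icc fun x hx => ?_
      have hwx := hpos x hx
      have h1 : Real.exp (Real.log (w x) - c) = t⁻¹ * w x := by
        rw [Real.exp_sub, Real.exp_log hwx, hec]; field_simp
      have h2 : Real.exp (c - Real.log (w x)) = t * (w x)⁻¹ := by
        rw [Real.exp_sub, Real.exp_log hwx, hec]; ring
      rcases abs_cases (Real.log (w x) - c) with ⟨h, _⟩ | ⟨h, _⟩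
      · rw [h, h1]
        have : 0 ≤ t * (w x)⁻¹ := by positivity
        linarith
      · rw [h, show -(Real.log (w x) - c) = c - Real.log (w x) by ring, h2]
        have : 0 ≤ t⁻¹ * w x := by positivity
        linarith
    have hsplit : avg J (fun x => t⁻¹ * w x + t * (w x)⁻¹)
        = ENNReal.ofReal t⁻¹ * A + ENNReal.ofReal t * B := by
      rw [avg_add_on measurableSet_Icc (hw.const_mul _)
          (fun x hx => by have := hpos x hx; positivity)
          (fun x hx => by have := hpos x hx; positivity),
        avg_const_mul _ (by positivity), avg_const_mul _ ht0.le]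
    exact hmono.trans_eq hsplit
  refine hstep.trans ?_
  have hAeq : ENNReal.ofReal t = A := ENNReal.ofReal_toReal hAne
  have h1 : ENNReal.ofReal t⁻¹ * A = 1 := by
    rw [← hAeq, ← ENNReal.ofReal_mul (by positivity), inv_mul_cancel₀ ht0.ne',
      ENNReal.ofReal_one]
  rw [h1, hAeq, two_mul]
  exact add_le_add_left hAB _

theorem stmt1 (w : ℝ → ℝ) (hw : Measurable w) (hwpos : ∀ x ∈ Icc (0:ℝ) 1, 0 < w x) :
    a2char w ^ (1/2 : ℝ) ≤ catwo w ∧ catwo w ≤ 2 * a2char w := by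
  constructor
  · have h2 : a2char w ≤ catwo w ^ (2:ℝ) := by
      unfold a2char
      refine iSup_le fun a => iSup_le fun b => iSup_le fun hJ => ?_
      have hpos : ∀ x ∈ Icc a b, 0 < w x := fun x hx => hwpos x (hJ hx)
      have hle : (avg (Icc a b) w * avg (Icc a b) (fun x => (w x)⁻¹)) ^ (1/2:ℝ)
          ≤ catwo w := by
        refine le_trans (le_iInf (sqrt_le_Vc w hpos)) ?_
        unfold catwo
        exact le_iSup_of_le a (le_iSup_of_le b (le_iSup_of_le hJ le_rfl))
      calc avg (Icc a b) w * avg (Icc a b) (fun x => (w x)⁻¹)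
          = ((avg (Icc a b) w * avg (Icc a b) (fun x => (w x)⁻¹)) ^ (1/2:ℝ)) ^ (2:ℝ) := by
            rw [← ENNReal.rpow_mul]; norm_num
        _ ≤ catwo w ^ (2:ℝ) := ENNReal.rpow_le_rpow hle (by norm_num)
    calc a2char w ^ (1/2:ℝ) ≤ (catwo w ^ (2:ℝ)) ^ (1/2:ℝ) :=
        ENNReal.rpow_le_rpow h2 (by norm_num)
      _ = catwo w := by rw [← ENNReal.rpow_mul]; norm_num
  · unfold catwo
    refine iSup_le fun a => iSup_le fun b => iSup_le fun hJ => ?_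
    have hpos : ∀ x ∈ Icc a b, 0 < w x := fun x hx => hwpos x (hJ hx)
    refine (iInf_le_two_mul w hw hpos).trans (mul_le_mul_right ?_ 2)
    unfold a2char
    exact le_iSup_of_le a (le_iSup_of_le b (le_iSup_of_le hJ le_rfl))
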